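/- arXiv:1106.1940 — 3 statements merged into one kernel-verified Lean document; each statement's English description precedes it below -/
import Mathlib

section
/- If a sequence (a_t) of nonnegative reals satisfies a_{t+1} = a_t + 1 - 3*a_t/(2t+1) for all t ≥ 1 with a_1 = 4, then |a_t - (2/5)*t| ≤ 3.6 for all t ≥ 1. -/
theorem stmt_0 (a : ℕ → ℝ) (hnn : ∀ t, 0 ≤ a t)
    (hrec : ∀ t, 1 ≤ t → a (t + 1) = a t + 1 - 3 * a t / (2 * t + 1))
    (h1 : a 1 = 4) :
    ∀ t, 1 ≤ t → |a t - (2 / 5) * t| ≤ 3.6 := by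
  intro t ht
  induction t, ht using Nat.le_induction with
  | base => rw [h1]; norm_num [abs_of_nonneg]
  | succ n hn ih =>
    have hT : (0:ℝ) < 2 * (n:ℝ) + 1 := by positivity
    have hn1 : (1:ℝ) ≤ (n:ℝ) := by exact_mod_cast hn
    have key : a (n+1) - (2/5) * ((n:ℝ)+1)
        = (a n - (2/5)*(n:ℝ)) * ((2*(n:ℝ) - 2)/(2*(n:ℝ)+1)) + 3/(5*(2*(n:ℝ)+1)) := by
      rw [hrec n hn]
      field_simp
      ring
    push_cast
    rw [key]
    have h2 : (0:ℝ) ≤ (2*(n:ℝ) - 2)/(2*(n:ℝ)+1) := by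
      apply div_nonneg _ hT.le
      linarith
    have h3 : |(a n - (2/5)*(n:ℝ)) * ((2*(n:ℝ)-2)/(2*(n:ℝ)+1))|
        ≤ 3.6 * ((2*(n:ℝ)-2)/(2*(n:ℝ)+1)) := by
      rw [abs_mul, abs_of_nonneg h2]
      exact mul_le_mul_of_nonneg_right ih h2
    have h4 : (0:ℝ) ≤ 3/(5*(2*(n:ℝ)+1)) := by positivity
    have h5 : 3.6 * ((2*(n:ℝ)-2)/(2*(n:ℝ)+1)) + 3/(5*(2*(n:ℝ)+1)) ≤ 3.6 := by
      rw [show 3.6 * ((2*(n:ℝ)-2)/(2*(n:ℝ)+1)) + 3/(5*(2*(n:ℝ)+1))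
          = (3.6*(2*(n:ℝ)-2) + 3/5)/(2*(n:ℝ)+1) by field_simp]
      rw [div_le_iff₀ hT]
      norm_num
      linarith
    calc |(a n - (2/5)*(n:ℝ)) * ((2*(n:ℝ)-2)/(2*(n:ℝ)+1)) + 3/(5*(2*(n:ℝ)+1))|
        ≤ |(a n - (2/5)*(n:ℝ)) * ((2*(n:ℝ)-2)/(2*(n:ℝ)+1))| + |3/(5*(2*(n:ℝ)+1))| :=
          abs_add_le _ _
      _ ≤ 3.6 * ((2*(n:ℝ)-2)/(2*(n:ℝ)+1)) + 3/(5*(2*(n:ℝ)+1)) := by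
          rw [abs_of_nonneg h4]; linarith
      _ ≤ 3.6 := h5
end

section
/- If a sequence (a_t) of reals satisfies a_{t+1} = a_t + 1 - 3*a_t/(2t+1) for all t ≥ 1 with a_1 = 4, then a_t / t converges to 2/5 as t → ∞. -/
theorem stmt_1 (a : ℕ → ℝ)
    (hrec : ∀ t, 1 ≤ t → a (t + 1) = a t + 1 - 3 * a t / (2 * t + 1))
    (h1 : a 1 = 4) :
    Filter.Tendsto (fun t : ℕ => a t / t) Filter.atTop (nhds (2 / 5)) := by
  have key : ∀ t, 2 ≤ t → a t = (2 * t + 1) / 5 := by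
    intro t ht
    induction t with
    | zero => omega
    | succ n ih =>
      rcases Nat.lt_or_ge n 2 with h | h
      · interval_cases n
        · omega
        · have h2 := hrec 1 le_rfl
          rw [h2, h1]
          norm_num
      · have hn := ih h
        have hr := hrec n (by omega)
        rw [hr, hn]
        have hpos : (2 * (n : ℝ) + 1) ≠ 0 := by positivity
        push_cast
        field_simp
        ring
  have hev : (fun t : ℕ => a t / t) =ᶠ[Filter.atTop]
      fun t : ℕ => 2 / 5 + 1 / (5 * t) := by
    filter_upwards [Filter.eventually_ge_atTop 2] with t ht
    have htpos : (t : ℝ) ≠ 0 := by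
      have : (0 : ℝ) < t := by exact_mod_cast Nat.lt_of_lt_of_le (by norm_num) ht
      linarith
    rw [key t ht]
    field_simp
  rw [Filter.tendsto_congr' hev]
  have h0 : Filter.Tendsto (fun t : ℕ => 1 / (5 * (t : ℝ))) Filter.atTop (nhds 0) := by
    have := tendsto_one_div_atTop_nhds_zero_nat.const_mul (1 / 5 : ℝ)
    simpa [div_eq_mul_inv, mul_inv, mul_comm, mul_assoc, mul_left_comm] using this
  have := h0.const_add (2 / 5 : ℝ)
  simpa using this
end

section
/- Suppose a real sequence (a_t) satisfies a_{t+1} = (1 - b_t/(t + t_1)) * a_t + c_t for all t ≥ t_0, where t_1 ≥ 0 is a fixed real, b_t → b > 0, and c_t → c. Then lim_{t→∞} a_t / t exists and equals c/(1+b). -/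
open Filter Finset Real

lemma key_rm (y α β : ℕ → ℝ) (L : ℝ)
    (hα : ∀ᶠ t in atTop, 0 ≤ α t ∧ α t ≤ 1)
    (hrec : ∀ᶠ t in atTop, y (t + 1) = (1 - α t) * y t + α t * β t)
    (hβ : Tendsto β atTop (nhds L))
    (hdiv : Tendsto (fun n => ∑ s ∈ Finset.range n, α s) atTop atTop) :
    Tendsto y atTop (nhds L) := by
  rw [Metric.tendsto_atTop]
  intro ε hε
  have hε3 : 0 < ε / 3 := by linarith
  have hβ' : ∀ᶠ t in atTop, |β t - L| ≤ ε / 3 := by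
    obtain ⟨N, hN⟩ := (Metric.tendsto_atTop.mp hβ) (ε/3) hε3
    filter_upwards [eventually_ge_atTop N] with t ht
    have := hN t ht
    rw [Real.dist_eq] at this; linarith
  obtain ⟨N, hN⟩ := eventually_atTop.mp ((hα.and hrec).and hβ')
  set e : ℕ → ℝ := fun t => |y t - L| with he
  have step : ∀ t, N ≤ t → e (t + 1) ≤ (1 - α t) * e t + α t * (ε / 3) := by
    intro t ht
    obtain ⟨⟨⟨hα0, hα1⟩, hr⟩, hb3⟩ := hN t ht
    have hid : y (t+1) - L = (1 - α t) * (y t - L) + α t * (β t - L) := by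
      rw [hr]; ring
    calc e (t+1) = |(1 - α t) * (y t - L) + α t * (β t - L)| := by
          simp only [he]; rw [hid]
      _ ≤ |(1 - α t) * (y t - L)| + |α t * (β t - L)| := abs_add_le _ _
      _ = (1 - α t) * |y t - L| + α t * |β t - L| := by
          rw [abs_mul, abs_mul, abs_of_nonneg (by linarith : (0:ℝ) ≤ 1 - α t),
            abs_of_nonneg hα0]
      _ ≤ (1 - α t) * e t + α t * (ε/3) :=
          add_le_add (le_refl _) (mul_le_mul_of_nonneg_left hb3 hα0)
  set P : ℕ → ℝ := fun n => ∏ s ∈ Finset.Ico N n, (1 - α s) with hPdef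
  have hP0 : ∀ n, 0 ≤ P n := by
    intro n
    apply Finset.prod_nonneg
    intro s hs
    have := (hN s (Finset.mem_Ico.mp hs).1).1.1.2
    linarith
  have bound : ∀ n, N ≤ n → e n ≤ P n * e N + ε/3 := by
    intro n hn
    induction n, hn using Nat.le_induction with
    | base =>
      simp only [hPdef, Finset.Ico_self, Finset.prod_empty, one_mul]
      linarith
    | succ n hn ih =>
      have hα0 := (hN n hn).1.1.1
      have hα1 := (hN n hn).1.1.2
      have hP : P (n+1) = P n * (1 - α n) := Finset.prod_Ico_succ_top hn _
      calc e (n+1) ≤ (1 - α n) * e n + α n * (ε/3) := step n hn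
        _ ≤ (1 - α n) * (P n * e N + ε/3) + α n * (ε/3) :=
            add_le_add (mul_le_mul_of_nonneg_left ih (by linarith)) (le_refl _)
        _ = P (n+1) * e N + ε/3 := by rw [hP]; ring
  have hPtend : Tendsto P atTop (nhds 0) := by
    have hub : ∀ᶠ n in atTop, P n ≤
        Real.exp (-(∑ s ∈ Finset.range n, α s - ∑ s ∈ Finset.range N, α s)) := by
      filter_upwards [eventually_ge_atTop N] with n hn
      have h1 : P n ≤ ∏ s ∈ Finset.Ico N n, Real.exp (-(α s)) := by
        apply Finset.prod_le_prod
        · intro s hs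
          have := (hN s (Finset.mem_Ico.mp hs).1).1.1.2
          linarith
        · intro s hs
          have := Real.add_one_le_exp (-(α s))
          linarith
      rw [← Real.exp_sum] at h1
      rwa [Finset.sum_neg_distrib, Finset.sum_Ico_eq_sub _ hn] at h1
    have hsum : Tendsto (fun n => ∑ s ∈ Finset.range n, α s
        - ∑ s ∈ Finset.range N, α s) atTop atTop :=
      tendsto_atTop_add_const_right _ _ hdiv
    have hexp : Tendsto (fun n => Real.exp (-(∑ s ∈ Finset.range n, α s
        - ∑ s ∈ Finset.range N, α s))) atTop (nhds 0) :=
      Real.tendsto_exp_atBot.comp (tendsto_neg_atBot_iff.mpr hsum)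
    exact squeeze_zero' (Eventually.of_forall hP0) hub hexp
  have hPe : Tendsto (fun n => P n * e N) atTop (nhds 0) := by
    simpa using hPtend.mul_const (e N)
  have hsmall : ∀ᶠ n in atTop, P n * e N < ε/3 := by
    have := hPe.eventually (eventually_lt_nhds hε3)
    simpa using this
  obtain ⟨M, hM⟩ := eventually_atTop.mp hsmall
  refine ⟨max N M, fun n hn => ?_⟩
  have hnN : N ≤ n := le_trans (le_max_left _ _) hn
  have hnM : M ≤ n := le_trans (le_max_right _ _) hn
  have := bound n hnN
  have h2 := hM n hnM
  rw [Real.dist_eq]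
  calc |y n - L| = e n := rfl
    _ ≤ P n * e N + ε/3 := bound n hnN
    _ < ε/3 + ε/3 := by linarith
    _ < ε := by linarith

theorem stmt_2 (a b c : ℕ → ℝ) (t₀ : ℕ) (t₁ : ℝ) (ht₁ : 0 ≤ t₁)
    (B C : ℝ) (hB : 0 < B)
    (hb : Filter.Tendsto b Filter.atTop (nhds B))
    (hc : Filter.Tendsto c Filter.atTop (nhds C))
    (hrec : ∀ t, t₀ ≤ t → a (t + 1) = (1 - b t / (t + t₁)) * a t + c t) :
    Filter.Tendsto (fun t : ℕ => a t / t) Filter.atTop (nhds (C / (1 + B))) := by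
  have h1B : (0:ℝ) < 1 + B := by linarith
  -- ratio t/(t+t₁) → 1
  have hrat : Tendsto (fun t : ℕ => (t:ℝ) / (t + t₁)) atTop (nhds 1) := by
    have h0 : Tendsto (fun t : ℕ => t₁ / (t:ℝ)) atTop (nhds 0) :=
      tendsto_const_div_atTop_nhds_zero_nat t₁
    have h1 : Tendsto (fun t : ℕ => ((t:ℝ) + t₁) / t) atTop (nhds 1) := by
      have : Tendsto (fun t : ℕ => 1 + t₁ / (t:ℝ)) atTop (nhds (1 + 0)) :=
        tendsto_const_nhds.add h0
      rw [add_zero] at this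
      apply this.congr'
      filter_upwards [eventually_ge_atTop 1] with t ht
      have htpos : (0:ℝ) < t := by exact_mod_cast ht
      field_simp
    have h2 : Tendsto (fun t : ℕ => (((t:ℝ) + t₁) / t)⁻¹) atTop (nhds 1⁻¹) :=
      h1.inv₀ one_ne_zero
    rw [inv_one] at h2
    apply h2.congr'
    filter_upwards [eventually_ge_atTop 1] with t ht
    have htpos : (0:ℝ) < t := by exact_mod_cast ht
    have htt : (0:ℝ) < (t:ℝ) + t₁ := by linarith
    rw [inv_div]
  set γ : ℕ → ℝ := fun t => 1 + (t:ℝ) * b t / ((t:ℝ) + t₁) with hγdef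
  have hγ : Tendsto γ atTop (nhds (1 + B)) := by
    have : Tendsto (fun t : ℕ => b t * ((t:ℝ) / ((t:ℝ) + t₁))) atTop (nhds (B * 1)) :=
      hb.mul hrat
    rw [mul_one] at this
    have h2 : Tendsto (fun t : ℕ => 1 + b t * ((t:ℝ) / ((t:ℝ) + t₁))) atTop (nhds (1 + B)) :=
      tendsto_const_nhds.add this
    apply h2.congr
    intro t
    simp only [hγdef]
    ring_nf
  have hγ1 : ∀ᶠ t in atTop, 1 ≤ γ t := by
    have : ∀ᶠ x in nhds (1 + B), 1 ≤ x := eventually_ge_nhds (by linarith)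
    exact hγ.eventually this
  have hγub : ∀ᶠ t in atTop, γ t ≤ 2 + B := by
    have : ∀ᶠ x in nhds (1 + B), x ≤ 2 + B := eventually_le_nhds (by linarith)
    exact hγ.eventually this
  set α : ℕ → ℝ := fun t => γ t / ((t:ℝ) + 1) with hαdef
  set β : ℕ → ℝ := fun t => c t * (γ t)⁻¹ with hβdef
  apply key_rm (fun t : ℕ => a t / t) α β
  · -- 0 ≤ α ≤ 1
    filter_upwards [hγ1, hγub, eventually_ge_atTop (⌈(1:ℝ) + B⌉₊ + 1)] with t h1 h2 h3
    have htp : (0:ℝ) < (t:ℝ) + 1 := by positivity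
    constructor
    · apply div_nonneg (by linarith) (by linarith)
    · rw [div_le_one htp]
      have : ((1:ℝ) + B) ≤ t := by
        calc (1:ℝ) + B ≤ ⌈(1:ℝ) + B⌉₊ := Nat.le_ceil _
          _ ≤ (t:ℝ) := by exact_mod_cast le_trans (Nat.le_succ _) h3
      linarith
  · -- recurrence
    filter_upwards [hγ1, eventually_ge_atTop (max t₀ 1)] with t h1 ht
    have ht0 : t₀ ≤ t := le_trans (le_max_left _ _) ht
    have ht1 : 1 ≤ t := le_trans (le_max_right _ _) ht
    have htR : (1:ℝ) ≤ (t:ℝ) := by exact_mod_cast ht1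
    have htpos : (0:ℝ) < t := by linarith
    have httpos : (0:ℝ) < (t:ℝ) + t₁ := by linarith
    have ht1pos : (0:ℝ) < (t:ℝ) + 1 := by linarith
    have hγpos : (0:ℝ) < γ t := by linarith
    have hcast : ((t + 1 : ℕ) : ℝ) = (t:ℝ) + 1 := by push_cast; ring
    have hγne : γ t ≠ 0 := ne_of_gt hγpos
    have htne : (t:ℝ) ≠ 0 := ne_of_gt htpos
    have httne : (t:ℝ) + t₁ ≠ 0 := ne_of_gt httpos
    have ht1ne : (t:ℝ) + 1 ≠ 0 := ne_of_gt ht1pos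
    have hab : α t * β t = c t / ((t:ℝ) + 1) := by
      simp only [hαdef, hβdef]
      field_simp
    have h1α : 1 - α t = (t:ℝ) * (1 - b t / ((t:ℝ) + t₁)) / ((t:ℝ) + 1) := by
      simp only [hαdef, hγdef]
      field_simp
      ring
    rw [hrec t ht0, hcast, hab, h1α]
    field_simp
  · -- β → C/(1+B)
    have : Tendsto β atTop (nhds (C * (1 + B)⁻¹)) :=
      hc.mul (hγ.inv₀ (by linarith))
    rwa [← div_eq_mul_inv] at this
  · -- sum divergence
    have hH : Tendsto (fun n => ∑ s ∈ Finset.range n, (1:ℝ) / (s + 1)) atTop atTop := by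
      simpa using Real.tendsto_sum_range_one_div_nat_succ_atTop
    obtain ⟨N, hN⟩ := eventually_atTop.mp hγ1
    have hmono : ∀ᶠ n in atTop, ∑ s ∈ Finset.range n, (1:ℝ)/(s+1)
        + (∑ s ∈ Finset.range N, α s - ∑ s ∈ Finset.range N, (1:ℝ)/(s+1))
        ≤ ∑ s ∈ Finset.range n, α s := by
      filter_upwards [eventually_ge_atTop N] with n hn
      have key : ∑ s ∈ Finset.Ico N n, (1:ℝ)/(s+1) ≤ ∑ s ∈ Finset.Ico N n, α s := by
        apply Finset.sum_le_sum
        intro s hs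
        have hsN := (Finset.mem_Ico.mp hs).1
        have hγs := hN s hsN
        have hsp : (0:ℝ) < (s:ℝ) + 1 := by positivity
        rw [hαdef, div_le_div_iff₀ hsp hsp, one_mul]
        nlinarith
      rw [Finset.sum_Ico_eq_sub _ hn, Finset.sum_Ico_eq_sub _ hn] at key
      linarith
    exact tendsto_atTop_mono' _ hmono (tendsto_atTop_add_const_right _ _ hH)
end
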